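/- arXiv:1510.01000 — 2 statements merged into one kernel-verified Lean document; each statement's English description precedes it below -/
import Mathlib

section
/- Let K be a field of characteristic zero and R = K[[t]]. If φ ∈ R^n is a solution of a differential polynomial P ∈ R{x_1,...,x_n} (i.e., P(φ) = 0), then trop(φ) = (Supp(φ_1),...,Supp(φ_n)) is a solution of the tropical differential polynomial trop(P). -/
/-- Formal derivative of a power series. -/
noncomputable def pd {K : Type*} [Semiring K] (φ : PowerSeries K) : PowerSeries K :=
  PowerSeries.mk fun k => ((k + 1 : ℕ) : K) * PowerSeries.coeff (k + 1) φ

/-- Support of a power series. -/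
def suppS {K : Type*} [Semiring K] (φ : PowerSeries K) : Set ℕ :=
  {k | PowerSeries.coeff k φ ≠ 0}

/-- t-adic valuation of a power series, with value `⊤` at `0`. -/
noncomputable def pval {K : Type*} [Semiring K] (φ : PowerSeries K) : ℕ∞ :=
  sInf ((fun k : ℕ => (k : ℕ∞)) '' suppS φ)

/-- `Val_S(j) = min{s ∈ S : s ≥ j} − j`, or `⊤` if `S ∩ Z_{≥j} = ∅`. -/
noncomputable def ValS (S : Set ℕ) (j : ℕ) : ℕ∞ :=
  sInf ((fun s : ℕ => ((s - j : ℕ) : ℕ∞)) '' {s ∈ S | j ≤ s})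

/-- Tropical evaluation of the differential monomial with exponent matrix `m`:
`ε_m(S) = Σ m_{ij} · Val_{S_i}(j)`. -/
noncomputable def eps {n : ℕ} (m : (Fin n × ℕ) →₀ ℕ) (S : Fin n → Set ℕ) : ℕ∞ :=
  m.sum fun v k => (k : ℕ∞) * ValS (S v.1) v.2

/-- Value at `S` of the tropicalization of a differential polynomial:
`min over monomials m of val(ψ_m) + ε_m(S)`. -/
noncomputable def tropVal {K : Type*} [CommSemiring K] {n : ℕ}
    (P : MvPolynomial (Fin n × ℕ) (PowerSeries K)) (S : Fin n → Set ℕ) : ℕ∞ :=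
  sInf ((fun m => pval (MvPolynomial.coeff m P) + eps m S) '' (P.support : Set ((Fin n × ℕ) →₀ ℕ)))

/-- `S` is a solution of `trop(P)`: the minimum is `⊤` or is attained at two distinct monomials. -/
noncomputable def isTropSol {K : Type*} [CommSemiring K] {n : ℕ}
    (P : MvPolynomial (Fin n × ℕ) (PowerSeries K)) (S : Fin n → Set ℕ) : Prop :=
  tropVal P S = ⊤ ∨
    ∃ m₁ ∈ P.support, ∃ m₂ ∈ P.support, m₁ ≠ m₂ ∧
      pval (MvPolynomial.coeff m₁ P) + eps m₁ S = tropVal P S ∧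
      pval (MvPolynomial.coeff m₂ P) + eps m₂ S = tropVal P S

/-- The derivation on the ring of differential polynomials `R{x_1,…,x_n}`,
extending the derivation `d` on `R`, with `d(x_{ij}) = x_{i(j+1)}`. -/
noncomputable def dPoly {R : Type*} [CommRing R] (d : R → R) {n : ℕ}
    (P : MvPolynomial (Fin n × ℕ) R) : MvPolynomial (Fin n × ℕ) R :=
  ((AddMonoidAlgebra.coeff P).sum fun m c => MvPolynomial.monomial m (d c)) +
    ∑ v ∈ P.vars, MvPolynomial.X (v.1, v.2 + 1) * MvPolynomial.pderiv v P

/-- Evaluation of a differential polynomial at a tuple of power series: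
substitute `x_{ij} ↦ d^j φ_i`. -/
noncomputable def evalDP {K : Type*} [CommRing K] {n : ℕ} (φ : Fin n → PowerSeries K)
    (P : MvPolynomial (Fin n × ℕ) (PowerSeries K)) : PowerSeries K :=
  MvPolynomial.eval (fun v => pd^[v.2] (φ v.1)) P

/-- The bijection `Ψ : K^{Z≥0} → K[[t]]`, `Ψ(a) = Σ a_j t^j / j!`. -/
noncomputable def Psi {K : Type*} [Field K] (a : ℕ → K) : PowerSeries K :=
  PowerSeries.mk fun j => a j / (j.factorial : K)

/-- The Zariski topology on affine `N`-space over `K`. -/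
def zariskiT (N : ℕ) (K : Type*) [CommRing K] : TopologicalSpace (Fin N → K) :=
  TopologicalSpace.generateFrom
    {U | ∃ p : MvPolynomial (Fin N) K, U = {x | MvPolynomial.eval x p ≠ 0}}

/-- A constructible set: a finite union of locally closed sets. -/
def IsConstructibleIn {X : Type*} (τ : TopologicalSpace X) (C : Set X) : Prop :=
  ∃ (r : ℕ) (U Z : Fin r → Set X),
    (∀ i, @IsOpen X τ (U i)) ∧ (∀ i, @IsClosed X τ (Z i)) ∧ C = ⋃ i, U i ∩ Z i
open PowerSeries in
lemma pval_eq_order {K : Type*} [Semiring K] (f : PowerSeries K) : pval f = f.order := by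
  cases h : f.order with
  | top =>
    rw [order_eq_top] at h; subst h
    simp [pval, suppS, sInf_empty]
  | coe n =>
    rw [order_eq_nat] at h
    refine le_antisymm (sInf_le ⟨n, h.1, rfl⟩) (le_sInf ?_)
    rintro x ⟨k, hk, rfl⟩
    have : n ≤ k := not_lt.mp fun hlt => hk (h.2 k hlt)
    simpa using (Nat.cast_le (α := ℕ∞)).mpr this

lemma pval_mul {K : Type*} [Field K] (f g : PowerSeries K) :
    pval (f * g) = pval f + pval g := by
  simp [pval_eq_order, PowerSeries.order_mul]

lemma pval_one {K : Type*} [Field K] : pval (1 : PowerSeries K) = 0 := by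
  simp [pval_eq_order, PowerSeries.order_one]

lemma pval_pow {K : Type*} [Field K] (f : PowerSeries K) (k : ℕ) :
    pval (f ^ k) = (k : ℕ∞) * pval f := by
  induction k with
  | zero => simp [pval_one]
  | succ k ih =>
    rw [pow_succ, pval_mul, ih, Nat.cast_succ, add_one_mul]

lemma suppS_pd {K : Type*} [Field K] [CharZero K] (f : PowerSeries K) :
    suppS (pd f) = {k | k + 1 ∈ suppS f} := by
  ext k
  simp only [suppS, pd, Set.mem_setOf_eq, PowerSeries.coeff_mk, mul_ne_zero_iff]
  constructor
  · exact fun h => h.2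
  · exact fun h => ⟨Nat.cast_ne_zero.mpr (Nat.succ_ne_zero k), h⟩

lemma suppS_iterate_pd {K : Type*} [Field K] [CharZero K] (f : PowerSeries K) (j : ℕ) :
    suppS (pd^[j] f) = {k | k + j ∈ suppS f} := by
  induction j with
  | zero => simp
  | succ j ih =>
    ext k
    rw [Function.iterate_succ_apply', suppS_pd, Set.mem_setOf_eq]
    have : k + 1 ∈ {k | k + j ∈ suppS f} ↔ k + (j+1) ∈ suppS f := by
      simp [Set.mem_setOf_eq]; ring_nf
    rw [ih] at *
    simpa [Set.mem_setOf_eq] using this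

lemma pval_iterate_pd {K : Type*} [Field K] [CharZero K] (f : PowerSeries K) (j : ℕ) :
    pval (pd^[j] f) = ValS (suppS f) j := by
  unfold pval ValS
  rw [suppS_iterate_pd]
  congr 1
  ext x
  constructor
  · rintro ⟨k, hk, rfl⟩
    exact ⟨k + j, ⟨hk, Nat.le_add_left _ _⟩, by simp⟩
  · rintro ⟨s, ⟨hs, hj⟩, rfl⟩
    exact ⟨s - j, by simpa [Nat.sub_add_cancel hj] using hs, rfl⟩

lemma pval_prod {K : Type*} [Field K] {ι : Type*} (s : Finset ι) (g : ι → PowerSeries K) :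
    pval (∏ v ∈ s, g v) = ∑ v ∈ s, pval (g v) := by
  induction s using Finset.cons_induction with
  | empty => simp [pval_one]
  | cons a s ha ih => rw [Finset.prod_cons, Finset.sum_cons, pval_mul, ih]

/-- If `φ` is a solution of `P` then `trop(φ)` is a solution of `trop(P)`. -/
theorem stmt8 {K : Type*} [Field K] [CharZero K] {n : ℕ}
    (P : MvPolynomial (Fin n × ℕ) (PowerSeries K)) (φ : Fin n → PowerSeries K)
    (h : evalDP φ P = 0) :
    isTropSol P (fun i => suppS (φ i)) := by
  classical
  set S : Fin n → Set ℕ := fun i => suppS (φ i) with hS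
  set x : Fin n × ℕ → PowerSeries K := fun v => pd^[v.2] (φ v.1) with hx
  set c : ((Fin n × ℕ) →₀ ℕ) → ℕ∞ :=
    fun m => pval (MvPolynomial.coeff m P) + eps m S with hc
  have hterm : ∀ m : (Fin n × ℕ) →₀ ℕ,
      pval (MvPolynomial.coeff m P * m.prod fun v k => x v ^ k) = c m := by
    intro m
    rw [hc, pval_mul]
    congr 1
    rw [Finsupp.prod, pval_prod, eps, Finsupp.sum]
    refine Finset.sum_congr rfl fun v _ => ?_
    rw [pval_pow, hx, pval_iterate_pd]
  have hsum : (∑ m ∈ P.support, MvPolynomial.coeff m P * m.prod fun v k => x v ^ k) = 0 := by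
    rw [← h, evalDP]
    conv_rhs => rw [← P.support_sum_monomial_coeff]
    rw [map_sum]
    exact Finset.sum_congr rfl fun m _ => (MvPolynomial.eval_monomial).symm
  have htv : tropVal P S = sInf (c '' (P.support : Set ((Fin n × ℕ) →₀ ℕ))) := rfl
  by_cases hT : tropVal P S = ⊤
  · exact Or.inl hT
  · right
    have hne : (c '' (P.support : Set ((Fin n × ℕ) →₀ ℕ))).Nonempty := by
      by_contra hne
      rw [Set.not_nonempty_iff_eq_empty] at hne
      exact hT (by rw [htv, hne, sInf_empty])
    have hmem : tropVal P S ∈ c '' (P.support : Set ((Fin n × ℕ) →₀ ℕ)) := by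
      rw [htv]
      exact Set.Nonempty.csInf_mem hne (P.support.finite_toSet.image _)
    obtain ⟨m₁, hm₁s, hm₁⟩ := hmem
    rw [Finset.mem_coe] at hm₁s
    obtain ⟨N, hN⟩ : ∃ N : ℕ, tropVal P S = (N : ℕ∞) := by
      cases hTT : tropVal P S with
      | top => exact absurd hTT hT
      | coe N => exact ⟨N, rfl⟩
    have key : ∃ m₂ ∈ P.support, m₂ ≠ m₁ ∧ c m₂ = tropVal P S := by
      by_contra Hc
      push_neg at Hc
      have hlt : ∀ m ∈ P.support, m ≠ m₁ →
          (N : ℕ∞) < c m := fun m hm hne' => by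
        have hle : tropVal P S ≤ c m := htv ▸ sInf_le ⟨m, hm, rfl⟩
        rw [hN] at hle
        exact lt_of_le_of_ne hle (fun e => Hc m hm hne' (e ▸ hN.symm))
      have h0 : PowerSeries.coeff N
          (∑ m ∈ P.support, MvPolynomial.coeff m P * m.prod fun v k => x v ^ k) = 0 := by
        rw [hsum]; simp
      rw [map_sum, Finset.sum_eq_single_of_mem m₁ hm₁s (fun m hm hne' => by
        refine PowerSeries.coeff_of_lt_order N ?_
        rw [← pval_eq_order, hterm]
        exact hlt m hm hne')] at h0
      have ho : (MvPolynomial.coeff m₁ P * m₁.prod fun v k => x v ^ k).order = (N : ℕ∞) := by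
        rw [← pval_eq_order, hterm, hm₁, hN]
      exact (PowerSeries.order_eq_nat.mp ho).1 h0
    obtain ⟨m₂, hm₂s, hne', hm₂⟩ := key
    exact ⟨m₁, hm₁s, m₂, hm₂s, fun e => hne' e.symm, hm₁, hm₂⟩
end

section
/- Let K be an algebraically closed field of characteristic zero, R = K[[t]], and let g = E_M + h + tλ ∈ R{x_1,...,x_n}, where E_M is a differential monomial with exponent matrix M, h ∈ K[x_{ij}] is a polynomial all of whose monomials contain some variable x_{ij} with j ∉ S_i, and λ ∈ R{x_1,...,x_n} is arbitrary. If M_{ij} ≠ 0 implies j ∈ S_i for the n-tuple S = (S_1,...,S_n) of subsets of Z_{≥0}, then trop(g)(S) = 0 and the minimum in trop(g)(S) is attained only at the monomial ε_M; consequently S is not a solution of trop(g). -/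
lemma pval_eq_zero_of {K : Type*} [Semiring K] (φ : PowerSeries K)
    (h : PowerSeries.coeff 0 φ ≠ 0) : pval φ = 0 := by
  refine le_antisymm ?_ zero_le
  exact sInf_le ⟨0, h, rfl⟩

lemma one_le_pval_of {K : Type*} [Semiring K] (φ : PowerSeries K)
    (h : PowerSeries.coeff 0 φ = 0) : 1 ≤ pval φ := by
  refine le_sInf ?_
  rintro x ⟨k, hk, rfl⟩
  have : k ≠ 0 := fun h0 => hk (h0 ▸ h)
  show (1 : ℕ∞) ≤ (k : ℕ∞)
  exact_mod_cast Nat.one_le_iff_ne_zero.mpr this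

lemma ValS_eq_zero {S : Set ℕ} {j : ℕ} (h : j ∈ S) : ValS S j = 0 := by
  refine le_antisymm ?_ zero_le
  have : ((j - j : ℕ) : ℕ∞) ∈ (fun s : ℕ => ((s - j : ℕ) : ℕ∞)) '' {s ∈ S | j ≤ s} :=
    ⟨j, ⟨h, le_refl j⟩, rfl⟩
  simpa [ValS] using sInf_le this

lemma one_le_ValS {S : Set ℕ} {j : ℕ} (h : j ∉ S) : 1 ≤ ValS S j := by
  refine le_sInf ?_
  rintro x ⟨s, ⟨hs, hjs⟩, rfl⟩
  have hne : j ≠ s := fun e => h (e ▸ hs)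
  have : 1 ≤ s - j := by omega
  show (1 : ℕ∞) ≤ ((s - j : ℕ) : ℕ∞)
  exact_mod_cast this

lemma eps_M_eq_zero {n : ℕ} (M : (Fin n × ℕ) →₀ ℕ) (S : Fin n → Set ℕ)
    (hM : ∀ v : Fin n × ℕ, M v ≠ 0 → v.2 ∈ S v.1) : eps M S = 0 := by
  rw [eps, Finsupp.sum]
  apply Finset.sum_eq_zero
  intro v hv
  rw [ValS_eq_zero (hM v (Finsupp.mem_support_iff.mp hv)), mul_zero]

lemma one_le_eps {n : ℕ} (m : (Fin n × ℕ) →₀ ℕ) (S : Fin n → Set ℕ)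
    {v : Fin n × ℕ} (hv : v ∈ m.support) (hvS : v.2 ∉ S v.1) : 1 ≤ eps m S := by
  have h1 : ((m v : ℕ∞) * ValS (S v.1) v.2) ≤ eps m S :=
    Finset.single_le_sum (f := fun v => (m v : ℕ∞) * ValS (S v.1) v.2)
      (fun _ _ => zero_le) hv
  refine le_trans ?_ h1
  have hmv : 1 ≤ (m v : ℕ∞) := by
    exact_mod_cast Nat.one_le_iff_ne_zero.mpr (Finsupp.mem_support_iff.mp hv)
  calc (1 : ℕ∞) = 1 * 1 := (one_mul 1).symm
    _ ≤ (m v : ℕ∞) * ValS (S v.1) v.2 := mul_le_mul' hmv (one_le_ValS hvS)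

/-- For `g = E_M + h + tλ` with every monomial of `h` containing a variable `x_{ij}`
with `j ∉ S_i`, and `M_{ij} ≠ 0 → j ∈ S_i`: `trop(g)(S) = 0`, the minimum is attained
only at `ε_M`, and `S` is not a solution of `trop(g)`. -/
theorem stmt19 {K : Type*} [Field K] [CharZero K] [IsAlgClosed K] {n : ℕ}
    (M : (Fin n × ℕ) →₀ ℕ) (S : Fin n → Set ℕ)
    (hM : ∀ v : Fin n × ℕ, M v ≠ 0 → v.2 ∈ S v.1)
    (h0 : MvPolynomial (Fin n × ℕ) K)
    (hh : ∀ m ∈ h0.support, ∃ v ∈ m.support, v.2 ∉ S v.1)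
    (lam : MvPolynomial (Fin n × ℕ) (PowerSeries K)) :
    let g := MvPolynomial.monomial M (1 : PowerSeries K) +
      MvPolynomial.map (PowerSeries.C (R := K)) h0 + MvPolynomial.C PowerSeries.X * lam
    tropVal g S = 0 ∧
    (∀ m ∈ g.support, m ≠ M → 0 < pval (MvPolynomial.coeff m g) + eps m S) ∧
    ¬ isTropSol g S := by
  intro g
  have hMh : M ∉ h0.support := by
    intro hmem
    obtain ⟨v, hv, hvS⟩ := hh M hmem
    exact hvS (hM v (Finsupp.mem_support_iff.mp hv))
  have hcoeffM : MvPolynomial.coeff M g =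
      1 + PowerSeries.X * MvPolynomial.coeff M lam := by
    simp [g, MvPolynomial.coeff_add, MvPolynomial.coeff_monomial,
      MvPolynomial.coeff_map, MvPolynomial.coeff_C_mul,
      MvPolynomial.notMem_support_iff.mp hMh]
  have hconstM : PowerSeries.coeff 0 (MvPolynomial.coeff M g) = 1 := by
    rw [hcoeffM]
    simp [PowerSeries.coeff_zero_eq_constantCoeff, map_add, map_mul]
  have hfM : pval (MvPolynomial.coeff M g) + eps M S = 0 := by
    rw [pval_eq_zero_of _ (by rw [hconstM]; exact one_ne_zero),
      eps_M_eq_zero M S hM, add_zero]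
  have hMsupp : M ∈ g.support := by
    rw [MvPolynomial.mem_support_iff]
    intro h
    rw [h] at hconstM
    simp at hconstM
  have hpos : ∀ m ∈ g.support, m ≠ M →
      0 < pval (MvPolynomial.coeff m g) + eps m S := by
    intro m hm hne
    have hc : MvPolynomial.coeff m g = PowerSeries.C (MvPolynomial.coeff m h0)
        + PowerSeries.X * MvPolynomial.coeff m lam := by
      simp [g, MvPolynomial.coeff_add, MvPolynomial.coeff_monomial,
        MvPolynomial.coeff_map, MvPolynomial.coeff_C_mul, if_neg (Ne.symm hne)]
    by_cases hch : MvPolynomial.coeff m h0 = 0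
    · have h0c : PowerSeries.coeff 0 (MvPolynomial.coeff m g) = 0 := by
        rw [hc, hch]
        simp [PowerSeries.coeff_zero_eq_constantCoeff, map_add, map_mul]
      exact lt_of_lt_of_le zero_lt_one (le_trans (one_le_pval_of _ h0c) le_self_add)
    · obtain ⟨v, hv, hvS⟩ := hh m (MvPolynomial.mem_support_iff.mpr hch)
      exact lt_of_lt_of_le zero_lt_one (le_trans (one_le_eps m S hv hvS) le_add_self)
  have htrop : tropVal g S = 0 := by
    refine le_antisymm ?_ zero_le
    rw [tropVal]
    exact sInf_le ⟨M, Finset.mem_coe.mpr hMsupp, hfM⟩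
  refine ⟨htrop, hpos, ?_⟩
  rintro (htop | ⟨m₁, hm₁, m₂, hm₂, hne, he₁, he₂⟩)
  · rw [htrop] at htop
    simp at htop
  · rcases eq_or_ne m₁ M with rfl | h1
    · have := hpos m₂ hm₂ hne.symm
      rw [he₂, htrop] at this
      exact lt_irrefl _ this
    · have := hpos m₁ hm₁ h1
      rw [he₁, htrop] at this
      exact lt_irrefl _ this
end
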